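/- arXiv:1804.04051 — 2 statements merged into one kernel-verified Lean document; each statement's English description precedes it below -/
import Mathlib

section
/- Maximal characterization of the geometric mean: for positive definite matrices P, Q in S^d_{++}, the geometric mean P # Q := P^{1/2}(P^{-1/2} Q P^{-1/2})^{1/2} P^{1/2} is the maximum, in the Loewner order, of the set of symmetric matrices Y such that the 2d × 2d block matrix [[P, Y],[Y, Q]] is positive semidefinite. In particular, [[P, P#Q],[P#Q, Q]] ⪰ 0, and any symmetric Y with [[P, Y],[Y, Q]] ⪰ 0 satisfies Y ⪯ P # Q. -/
open Matrix

/-- Real power of a matrix via the spectral decomposition (defined for Hermitian input). -/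
noncomputable def mpow {d : ℕ} (A : Matrix (Fin d) (Fin d) ℝ) (t : ℝ) : Matrix (Fin d) (Fin d) ℝ :=
  if hA : A.IsHermitian then
    (hA.eigenvectorUnitary : Matrix (Fin d) (Fin d) ℝ) *
      Matrix.diagonal (fun i => hA.eigenvalues i ^ t) *
      star (hA.eigenvectorUnitary : Matrix (Fin d) (Fin d) ℝ)
  else A

/-- The geodesic `X #ₜ Y = X^{1/2} (X^{-1/2} Y X^{-1/2})^t X^{1/2}`. -/
noncomputable def geo {d : ℕ} (X Y : Matrix (Fin d) (Fin d) ℝ) (t : ℝ) : Matrix (Fin d) (Fin d) ℝ :=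
  mpow X (1/2) * mpow (mpow X (-(1/2)) * Y * mpow X (-(1/2))) t * mpow X (1/2)

/-- The matrix geometric mean `X # Y`. -/
noncomputable def gmean {d : ℕ} (X Y : Matrix (Fin d) (Fin d) ℝ) : Matrix (Fin d) (Fin d) ℝ :=
  geo X Y (1/2)


variable {d : ℕ}

lemma mpow_eq {A : Matrix (Fin d) (Fin d) ℝ} (hA : A.IsHermitian) (t : ℝ) :
    mpow A t = (hA.eigenvectorUnitary : Matrix (Fin d) (Fin d) ℝ) *
      Matrix.diagonal (fun i => hA.eigenvalues i ^ t) *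
      star (hA.eigenvectorUnitary : Matrix (Fin d) (Fin d) ℝ) := dif_pos hA

lemma mpow_isHermitian {A : Matrix (Fin d) (Fin d) ℝ} (hA : A.IsHermitian) (t : ℝ) :
    (mpow A t).IsHermitian := by
  rw [mpow_eq hA, Matrix.star_eq_conjTranspose]
  exact Matrix.isHermitian_mul_mul_conjTranspose _ (Matrix.isHermitian_diagonal _)

lemma posDef_conj {N B : Matrix (Fin d) (Fin d) ℝ} (hN : N.PosDef) (hB : IsUnit B) :
    (B * N * Bᴴ).PosDef := by
  refine Matrix.PosDef.of_dotProduct_mulVec_pos (Matrix.isHermitian_mul_mul_conjTranspose _ hN.1) fun x hx => ?_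
  have hBH : IsUnit Bᴴ := by
    rw [Matrix.isUnit_iff_isUnit_det, Matrix.det_conjTranspose]
    exact (Matrix.isUnit_iff_isUnit_det B |>.mp hB).star
  have hinj : Function.Injective (Bᴴ).mulVec := Matrix.mulVec_injective_iff_isUnit.2 hBH
  have hx' : Bᴴ *ᵥ x ≠ 0 := fun h => hx (hinj (by rw [h, Matrix.mulVec_zero]))
  have := hN.dotProduct_mulVec_pos hx'
  simpa only [star_mulVec, dotProduct_mulVec, vecMul_vecMul, Matrix.conjTranspose_conjTranspose]
    using this

lemma unit_of_unitary (U : Matrix.unitaryGroup (Fin d) ℝ) :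
    IsUnit (U : Matrix (Fin d) (Fin d) ℝ) :=
  ⟨Unitary.toUnits U, rfl⟩

lemma mpow_posDef {A : Matrix (Fin d) (Fin d) ℝ} (hA : A.PosDef) (t : ℝ) :
    (mpow A t).PosDef := by
  rw [mpow_eq hA.1, Matrix.star_eq_conjTranspose]
  exact posDef_conj
    (Matrix.posDef_diagonal_iff.2 fun i => Real.rpow_pos_of_pos (hA.eigenvalues_pos i) t)
    (unit_of_unitary _)

lemma mpow_mul_mpow {A : Matrix (Fin d) (Fin d) ℝ} (hA : A.PosDef) (s t : ℝ) :
    mpow A s * mpow A t = mpow A (s + t) := by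
  rw [mpow_eq hA.1 s, mpow_eq hA.1 t, mpow_eq hA.1 (s + t)]
  set U := (hA.1.eigenvectorUnitary : Matrix (Fin d) (Fin d) ℝ) with hU
  have hu : star U * U = 1 := by exact_mod_cast Unitary.coe_star_mul_self _
  have hkey : Matrix.diagonal (fun i => hA.1.eigenvalues i ^ s) *
      Matrix.diagonal (fun i => hA.1.eigenvalues i ^ t) =
      Matrix.diagonal (fun i => hA.1.eigenvalues i ^ (s + t)) := by
    rw [Matrix.diagonal_mul_diagonal]
    exact congrArg Matrix.diagonal (funext fun i => (Real.rpow_add (hA.eigenvalues_pos i) s t).symm)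
  calc U * Matrix.diagonal (fun i => hA.1.eigenvalues i ^ s) * star U *
        (U * Matrix.diagonal (fun i => hA.1.eigenvalues i ^ t) * star U)
      = U * Matrix.diagonal (fun i => hA.1.eigenvalues i ^ s) * (star U * U) *
        (Matrix.diagonal (fun i => hA.1.eigenvalues i ^ t) * star U) := by
        simp only [Matrix.mul_assoc]
    _ = U * (Matrix.diagonal (fun i => hA.1.eigenvalues i ^ s) *
        Matrix.diagonal (fun i => hA.1.eigenvalues i ^ t)) * star U := by
        rw [hu, mul_one]; simp only [Matrix.mul_assoc]
    _ = _ := by rw [hkey]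

lemma mpow_zero {A : Matrix (Fin d) (Fin d) ℝ} (hA : A.PosDef) : mpow A 0 = 1 := by
  rw [mpow_eq hA.1]
  simp only [Real.rpow_zero, Matrix.diagonal_one, mul_one]
  exact_mod_cast Unitary.coe_mul_star_self _

lemma mpow_one {A : Matrix (Fin d) (Fin d) ℝ} (hA : A.PosDef) : mpow A 1 = A := by
  rw [mpow_eq hA.1]
  have := hA.1.spectral_theorem
  simp only [Real.rpow_one]
  conv_rhs => rw [this]
  simp [Unitary.conjStarAlgAut_apply]

lemma mpow_half_sq {A : Matrix (Fin d) (Fin d) ℝ} (hA : A.PosDef) :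
    mpow A (1/2) * mpow A (1/2) = A := by
  rw [mpow_mul_mpow hA]; norm_num [mpow_one hA]

lemma mpow_neg_half_mul {A : Matrix (Fin d) (Fin d) ℝ} (hA : A.PosDef) :
    mpow A (-(1/2)) * mpow A (1/2) = 1 := by
  rw [mpow_mul_mpow hA]; norm_num [mpow_zero hA]

lemma mpow_mul_neg_half {A : Matrix (Fin d) (Fin d) ℝ} (hA : A.PosDef) :
    mpow A (1/2) * mpow A (-(1/2)) = 1 := by
  rw [mpow_mul_mpow hA]; norm_num [mpow_zero hA]


lemma sqrt_mono_key {Z R M : Matrix (Fin d) (Fin d) ℝ} (hZ : Z.IsHermitian) (hR : R.PosDef)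
    (hRR : R * R = M) (h : (M - Z * Z).PosSemidef) : (R - Z).PosSemidef := by
  have hA : (R - Z).IsHermitian := hR.1.sub hZ
  apply hA.posSemidef_iff_eigenvalues_nonneg.mpr
  refine Pi.le_def.mpr fun i => ?_
  show 0 ≤ hA.eigenvalues i
  by_contra hneg
  push_neg at hneg
  set μ := hA.eigenvalues i with hμ
  set v : Fin d → ℝ := ⇑(hA.eigenvectorBasis i) with hv
  have hvne : v ≠ 0 := by
    have := hA.eigenvectorBasis.orthonormal.ne_zero i
    intro h0
    exact this (by ext j; exact congrFun h0 j)
  have hev : (R - Z) *ᵥ v = μ • v := hA.mulVec_eigenvectorBasis i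
  have hZv : Z *ᵥ v = R *ᵥ v - μ • v := by
    have : R *ᵥ v - Z *ᵥ v = μ • v := by rw [← Matrix.sub_mulVec]; exact hev
    linear_combination (norm := module) -this
  have hq := h.dotProduct_mulVec_nonneg v
  rw [Matrix.sub_mulVec] at hq
  have hRsym : Rᵀ = R := hR.1
  have hZsym : Zᵀ = Z := hZ
  have hdot : ∀ (B : Matrix (Fin d) (Fin d) ℝ), Bᵀ = B →
      v ⬝ᵥ (B * B) *ᵥ v = (B *ᵥ v) ⬝ᵥ (B *ᵥ v) := by
    intro B hB
    rw [← Matrix.mulVec_mulVec, Matrix.dotProduct_mulVec, ← Matrix.mulVec_transpose, hB]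
  have hq' : 0 ≤ (R *ᵥ v) ⬝ᵥ (R *ᵥ v) - (Z *ᵥ v) ⬝ᵥ (Z *ᵥ v) := by
    have e1 := hdot R hRsym
    have e2 := hdot Z hZsym
    rw [hRR] at e1
    simpa [dotProduct_sub, star_trivial, e1, e2, Matrix.sub_mulVec] using hq
  have hRpos : 0 < v ⬝ᵥ (R *ᵥ v) := by
    have := hR.dotProduct_mulVec_pos hvne
    simpa [star_trivial] using this
  have hvv : 0 ≤ v ⬝ᵥ v := Finset.sum_nonneg fun j _ => mul_self_nonneg (v j)
  rw [hZv] at hq'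
  have hexp : (R *ᵥ v - μ • v) ⬝ᵥ (R *ᵥ v - μ • v) =
      (R *ᵥ v) ⬝ᵥ (R *ᵥ v) - 2 * μ * (v ⬝ᵥ (R *ᵥ v)) + μ^2 * (v ⬝ᵥ v) := by
    simp only [sub_dotProduct, dotProduct_sub, smul_dotProduct, dotProduct_smul, smul_eq_mul]
    rw [dotProduct_comm (R *ᵥ v) v]
    ring
  rw [hexp] at hq'
  nlinarith [sq_nonneg μ]

lemma main_general {P Q S T M R : Matrix (Fin d) (Fin d) ℝ} (hQ : Q.PosDef)
    (hSh : Sᴴ = S) (hTh : Tᴴ = T) (hRh : R.IsHermitian) (hRpd : R.PosDef)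
    (hSS : S * S = P) (hTS : T * S = 1) (hST : S * T = 1)
    (hMdef : M = T * Q * T) (hRR : R * R = M) :
    (fromBlocks P (S * R * S) (S * R * S) Q).PosSemidef ∧
    (∀ Y : Matrix (Fin d) (Fin d) ℝ, Y.IsSymm →
      (fromBlocks P Y Y Q).PosSemidef → (S * R * S - Y).PosSemidef) := by
  have hSt : Sᵀ = S := by rw [← Matrix.conjTranspose_eq_transpose_of_trivial]; exact hSh
  have hTt : Tᵀ = T := by rw [← Matrix.conjTranspose_eq_transpose_of_trivial]; exact hTh
  have hRt : Rᵀ = R := by rw [← Matrix.conjTranspose_eq_transpose_of_trivial]; exact hRh.eq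
  have hconjS : ∀ W : Matrix (Fin d) (Fin d) ℝ, S * (T * W * T) * S = W := by
    intro W
    calc S * (T * W * T) * S = (S * T) * W * (T * S) := by simp only [Matrix.mul_assoc]
      _ = W := by rw [hST, hTS, one_mul, mul_one]
  have hSMS : S * M * S = Q := by rw [hMdef]; exact hconjS Q
  have hTPT : T * P * T = 1 := by
    rw [← hSS]
    calc T * (S * S) * T = (T * S) * (S * T) := by simp only [Matrix.mul_assoc]
      _ = 1 := by rw [hTS, hST, one_mul]
  constructor
  · have key1 : fromBlocks P (S * R * S) (S * R * S) Q =
        (fromBlocks S (R * S) 0 0)ᴴ * (fromBlocks S (R * S) 0 0) := by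
      rw [fromBlocks_conjTranspose, fromBlocks_multiply]
      refine (Matrix.fromBlocks_inj.2 ⟨?_, ?_, ?_, ?_⟩).symm
      · simp [hSt, hSS]
      · simp [hSt, Matrix.mul_assoc]
      · simp [Matrix.conjTranspose_eq_transpose_of_trivial, Matrix.transpose_mul, hSt, hRt,
          Matrix.mul_assoc]
      · have h4 : S * (R * (R * S)) = Q := by
          calc S * (R * (R * S)) = S * (R * R) * S := by simp only [Matrix.mul_assoc]
            _ = Q := by rw [hRR]; exact hSMS
        simpa [Matrix.conjTranspose_eq_transpose_of_trivial, Matrix.transpose_mul, hSt, hRt,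
          Matrix.mul_assoc] using h4
    rw [key1]
    exact Matrix.posSemidef_conjTranspose_mul_self _
  · intro Y hYsymm hYpsd
    have hYh : Yᴴ = Y := by rw [Matrix.conjTranspose_eq_transpose_of_trivial]; exact hYsymm
    set Z := T * Y * T with hZdef
    have hZh : Z.IsHermitian := by
      rw [Matrix.IsHermitian, hZdef]
      simp only [conjTranspose_mul, hTh, hYh]
      simp only [Matrix.mul_assoc]
    have h1 : (fromBlocks (1 : Matrix (Fin d) (Fin d) ℝ) Z Z M).PosSemidef := by
      have e : fromBlocks (1 : Matrix (Fin d) (Fin d) ℝ) Z Z M =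
          (fromBlocks T 0 0 T) * (fromBlocks P Y Y Q) * (fromBlocks T 0 0 T)ᴴ := by
        rw [fromBlocks_conjTranspose, fromBlocks_multiply, fromBlocks_multiply]
        refine (Matrix.fromBlocks_inj.2 ⟨?_, ?_, ?_, ?_⟩).symm <;>
          simp [hTt, hTPT, hMdef, hZdef]
      rw [e]
      exact hYpsd.mul_mul_conjTranspose_same _
    have h2 : (M - Z * Z).PosSemidef := by
      have hone : (1 : Matrix (Fin d) (Fin d) ℝ).PosDef := Matrix.PosDef.one
      have : Invertible (1 : Matrix (Fin d) (Fin d) ℝ) := invertibleOne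
      have := (Matrix.PosDef.fromBlocks₁₁ Z M hone).mp (by rw [hZh.eq]; exact h1)
      have hZt : Zᵀ = Z := by
        rw [← Matrix.conjTranspose_eq_transpose_of_trivial]; exact hZh.eq
      simpa [hZt] using this
    have h3 : (R - Z).PosSemidef := sqrt_mono_key hZh hRpd hRR h2
    have e2 : S * R * S - Y = S * (R - Z) * Sᴴ := by
      rw [hSh, Matrix.mul_sub, Matrix.sub_mul]
      congr 1
      exact (hconjS Y).symm
    rw [e2]
    exact h3.mul_mul_conjTranspose_same _

theorem stmt3 {d : ℕ} (P Q : Matrix (Fin d) (Fin d) ℝ) (hP : P.PosDef) (hQ : Q.PosDef) :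
    (Matrix.fromBlocks P (gmean P Q) (gmean P Q) Q).PosSemidef ∧
    (∀ Y : Matrix (Fin d) (Fin d) ℝ, Y.IsSymm →
      (Matrix.fromBlocks P Y Y Q).PosSemidef → (gmean P Q - Y).PosSemidef) := by
  set S := mpow P (1/2) with hSdef
  set T := mpow P (-(1/2)) with hTdef
  set M := T * Q * T with hMdef
  set R := mpow M (1/2) with hRdef
  have hT : T.PosDef := mpow_posDef hP _
  have hTh : Tᴴ = T := (mpow_isHermitian hP.1 _).eq
  have hSh : Sᴴ = S := (mpow_isHermitian hP.1 _).eq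
  have hM : M.PosDef := by
    have := posDef_conj hQ hT.isUnit
    rwa [hTh] at this
  have hR : R.PosDef := mpow_posDef hM _
  have hRh : R.IsHermitian := mpow_isHermitian hM.1 _
  have hG : gmean P Q = S * R * S := rfl
  rw [hG]
  exact main_general hQ hSh hTh hRh hR (mpow_half_sq hP) (mpow_neg_half_mul hP)
    (mpow_mul_neg_half hP) rfl (mpow_half_sq hM)
end

section
/- If Φ : S^d_+ → S^{d'}_+ is a positive linear map (maps PSD matrices to PSD matrices) and P, Q, R are d×d symmetric matrices with the block matrix [[P, R],[R, Q]] positive semidefinite, then the block matrix [[Φ(P), Φ(R)],[Φ(R), Φ(Q)]] is also positive semidefinite. -/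
open Matrix

/-- A diagonal matrix is the sum of its coordinate pieces. -/
lemma stmt4_diagonal_eq_sum {d : ℕ} (w : Fin d → ℝ) :
    Matrix.diagonal w = ∑ i, w i • Matrix.diagonal (Pi.single i (1:ℝ)) := by
  ext a b
  rw [Matrix.sum_apply]
  by_cases h : a = b
  · subst h
    simp [Matrix.diagonal_apply, Pi.single_apply]
  · simp [Matrix.diagonal_apply_ne _ h, Matrix.diagonal_apply, h]

lemma stmt4_dot_sum_mulVec {d' : ℕ} {ι : Type*} (s : Finset ι) (x y : Fin d' → ℝ)
    (M : ι → Matrix (Fin d') (Fin d') ℝ) :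
    x ⬝ᵥ ((∑ i ∈ s, M i) *ᵥ y) = ∑ i ∈ s, x ⬝ᵥ (M i *ᵥ y) := by
  classical
  induction s using Finset.induction with
  | empty => simp
  | insert a s h ih => simp [Finset.sum_insert h, Matrix.add_mulVec, ih]

/-- The key positivity estimate: the quadratic form of the blockwise image of the separable
matrix `[[V Vᴴ, V D Vᴴ], [V D Vᴴ, V D² Vᴴ]]` is nonnegative. -/
lemma stmt4_quad_nonneg {d d' : ℕ}
    (Φ : Matrix (Fin d) (Fin d) ℝ →ₗ[ℝ] Matrix (Fin d') (Fin d') ℝ)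
    (hΦ : ∀ X : Matrix (Fin d) (Fin d) ℝ, X.PosSemidef → (Φ X).PosSemidef)
    (V : Matrix (Fin d) (Fin d) ℝ) (D : Fin d → ℝ) (x y : Fin d' → ℝ) :
    0 ≤ x ⬝ᵥ (Φ (V * Vᴴ) *ᵥ x) + x ⬝ᵥ (Φ (V * Matrix.diagonal D * Vᴴ) *ᵥ y)
      + y ⬝ᵥ (Φ (V * Matrix.diagonal D * Vᴴ) *ᵥ x)
      + y ⬝ᵥ (Φ (V * Matrix.diagonal (fun i => D i ^ 2) * Vᴴ) *ᵥ y) := by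
  have key : ∀ w : Fin d → ℝ,
      Φ (V * Matrix.diagonal w * Vᴴ) = ∑ i, w i • Φ (V * Matrix.diagonal (Pi.single i 1) * Vᴴ) := by
    intro w
    rw [stmt4_diagonal_eq_sum w, Finset.mul_sum, Finset.sum_mul, map_sum]
    refine Finset.sum_congr rfl fun i _ => ?_
    rw [mul_smul_comm, smul_mul_assoc, LinearMap.map_smul]
  have hVV : V * Vᴴ = V * Matrix.diagonal (fun _ => (1:ℝ)) * Vᴴ := by
    rw [show Matrix.diagonal (fun _ => (1:ℝ)) = 1 from Matrix.diagonal_one, mul_one]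
  rw [hVV, key, key, key, stmt4_dot_sum_mulVec, stmt4_dot_sum_mulVec, stmt4_dot_sum_mulVec,
    stmt4_dot_sum_mulVec, ← Finset.sum_add_distrib, ← Finset.sum_add_distrib,
    ← Finset.sum_add_distrib]
  refine Finset.sum_nonneg fun i _ => ?_
  have hdiag : (Matrix.diagonal (Pi.single i (1:ℝ))).PosSemidef :=
    Matrix.posSemidef_diagonal_iff.mpr (fun j => by
      by_cases h : j = i <;> simp [h, Pi.single_apply])
  have hpsd : (V * Matrix.diagonal (Pi.single i (1:ℝ)) * Vᴴ).PosSemidef :=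
    hdiag.mul_mul_conjTranspose_same V
  have h0 := (hΦ _ hpsd).dotProduct_mulVec_nonneg (x + D i • y)
  rw [star_trivial] at h0
  set M := Φ (V * Matrix.diagonal (Pi.single i (1:ℝ)) * Vᴴ)
  simp only [Matrix.mulVec_add, Matrix.mulVec_smul, dotProduct_add, add_dotProduct,
    dotProduct_smul, smul_dotProduct, smul_eq_mul, Matrix.smul_mulVec, one_smul] at h0 ⊢
  nlinarith [h0]

open scoped MatrixOrder in
/-- Separable-type decomposition of a PSD block matrix with symmetric off-diagonal block and
positive definite upper-left block. -/
lemma stmt4_decomp {d : ℕ} {P Q R : Matrix (Fin d) (Fin d) ℝ}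
    (hP : P.PosDef) (hR : R.IsHermitian)
    (h : (Matrix.fromBlocks P R R Q).PosSemidef) :
    ∃ (V : Matrix (Fin d) (Fin d) ℝ) (D : Fin d → ℝ),
      P = V * Vᴴ ∧ R = V * Matrix.diagonal D * Vᴴ ∧
      (Q - V * Matrix.diagonal (fun i => D i ^ 2) * Vᴴ).PosSemidef := by
  classical
  have hPsd := hP.posSemidef
  set T := CFC.sqrt P with hTdef
  have hT : T.PosSemidef := (CFC.sqrt_nonneg P).posSemidef
  have hTT : T * T = P := CFC.sqrt_mul_sqrt_self P hPsd.nonneg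
  have hdet : IsUnit T.det := by
    have hdd : T.det * T.det = P.det := by rw [← Matrix.det_mul, hTT]
    have hp := hP.det_pos
    refine isUnit_iff_ne_zero.mpr fun h0 => ?_
    rw [h0, mul_zero] at hdd
    exact hp.ne hdd
  haveI : Invertible T := T.invertibleOfIsUnitDet hdet
  haveI : Invertible P := P.invertibleOfIsUnitDet (isUnit_iff_ne_zero.mpr hP.det_pos.ne')
  have hTH : Tᴴ = T := hT.1
  have hTinv : (T⁻¹)ᴴ = T⁻¹ := by rw [Matrix.conjTranspose_nonsing_inv, hTH]
  set S := T⁻¹ * R * T⁻¹ with hSdef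
  have hS : S.IsHermitian := by
    show Sᴴ = S
    rw [hSdef, Matrix.conjTranspose_mul, Matrix.conjTranspose_mul, hTinv, hR.eq]
    rw [Matrix.mul_assoc]
  set U : Matrix (Fin d) (Fin d) ℝ := (hS.eigenvectorUnitary : Matrix (Fin d) (Fin d) ℝ) with hUdef
  have hUU : U * Uᴴ = 1 := by
    rw [← Matrix.star_eq_conjTranspose]
    exact Matrix.mem_unitaryGroup_iff.mp hS.eigenvectorUnitary.2
  have hUU' : Uᴴ * U = 1 := by
    rw [← Matrix.star_eq_conjTranspose]
    exact Matrix.mem_unitaryGroup_iff'.mp hS.eigenvectorUnitary.2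
  have hspec : S = U * Matrix.diagonal hS.eigenvalues * Uᴴ := by
    have := hS.spectral_theorem
    rw [Unitary.conjStarAlgAut_apply] at this
    rw [← Matrix.star_eq_conjTranspose]
    exact this
  have hTi : T * T⁻¹ = 1 := Matrix.mul_nonsing_inv T hdet
  have hiT : T⁻¹ * T = 1 := Matrix.nonsing_inv_mul T hdet
  have hVH : (T * U)ᴴ = Uᴴ * T := by rw [Matrix.conjTranspose_mul, hTH]
  refine ⟨T * U, hS.eigenvalues, ?_, ?_, ?_⟩
  · rw [hVH]
    calc P = T * T := hTT.symm
    _ = T * (U * Uᴴ) * T := by rw [hUU, mul_one]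
    _ = T * U * (Uᴴ * T) := by simp only [Matrix.mul_assoc]
  · rw [hVH]
    have : T * S * T = R := by
      rw [hSdef]
      calc T * (T⁻¹ * R * T⁻¹) * T = (T * T⁻¹) * R * (T⁻¹ * T) := by simp only [Matrix.mul_assoc]
      _ = R := by rw [hTi, hiT, one_mul, mul_one]
    calc R = T * S * T := this.symm
    _ = T * (U * Matrix.diagonal hS.eigenvalues * Uᴴ) * T := by rw [← hspec]
    _ = T * U * Matrix.diagonal hS.eigenvalues * (Uᴴ * T) := by simp only [Matrix.mul_assoc]
  · rw [hVH]
    have hsq : T * U * Matrix.diagonal (fun i => hS.eigenvalues i ^ 2) * (Uᴴ * T)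
        = R * P⁻¹ * R := by
      have hd2 : Matrix.diagonal (fun i => hS.eigenvalues i ^ 2)
          = Matrix.diagonal hS.eigenvalues * Matrix.diagonal hS.eigenvalues := by
        rw [Matrix.diagonal_mul_diagonal]
        exact congr_arg _ (funext fun i => pow_two _)
      have hmid : U * Matrix.diagonal hS.eigenvalues * Uᴴ * (U * Matrix.diagonal hS.eigenvalues * Uᴴ)
          = U * (Matrix.diagonal hS.eigenvalues * Matrix.diagonal hS.eigenvalues) * Uᴴ := by
        have h1 : Uᴴ * (U * (Matrix.diagonal hS.eigenvalues * Uᴴ))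
            = Matrix.diagonal hS.eigenvalues * Uᴴ := by
          rw [← Matrix.mul_assoc, hUU', one_mul]
        simp only [Matrix.mul_assoc]
        rw [h1]
      have hSS : T * U * Matrix.diagonal (fun i => hS.eigenvalues i ^ 2) * (Uᴴ * T)
          = T * (S * S) * T := by
        rw [hd2]
        calc T * U * (Matrix.diagonal hS.eigenvalues * Matrix.diagonal hS.eigenvalues) * (Uᴴ * T)
            = T * (U * Matrix.diagonal hS.eigenvalues * Uᴴ
                * (U * Matrix.diagonal hS.eigenvalues * Uᴴ)) * T := by
              rw [hmid]
              simp only [Matrix.mul_assoc]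
        _ = T * (S * S) * T := by rw [← hspec]
      have hPinv : P⁻¹ = T⁻¹ * T⁻¹ := by
        rw [← hTT, Matrix.mul_inv_rev]
      rw [hSS, hSdef, hPinv]
      calc T * (T⁻¹ * R * T⁻¹ * (T⁻¹ * R * T⁻¹)) * T
          = (T * T⁻¹) * R * (T⁻¹ * T⁻¹) * R * (T⁻¹ * T) := by simp only [Matrix.mul_assoc]
      _ = R * (T⁻¹ * T⁻¹) * R := by rw [hTi, hiT, one_mul, mul_one]
    rw [hsq]
    have hblock : (Matrix.fromBlocks P R Rᴴ Q).PosSemidef := by rw [hR.eq]; exact h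
    have := (Matrix.PosDef.fromBlocks₁₁ R Q hP).mp hblock
    rwa [hR.eq] at this

theorem stmt4 {d d' : ℕ}
    (Φ : Matrix (Fin d) (Fin d) ℝ →ₗ[ℝ] Matrix (Fin d') (Fin d') ℝ)
    (hΦ : ∀ X : Matrix (Fin d) (Fin d) ℝ, X.PosSemidef → (Φ X).PosSemidef)
    (P Q R : Matrix (Fin d) (Fin d) ℝ)
    (hP : P.IsSymm) (hQ : Q.IsSymm) (hR : R.IsSymm)
    (h : (Matrix.fromBlocks P R R Q).PosSemidef) :
    (Matrix.fromBlocks (Φ P) (Φ R) (Φ R) (Φ Q)).PosSemidef := by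
  classical
  have hPH : P.IsHermitian := (Matrix.conjTranspose_eq_transpose_of_trivial P).trans hP
  have hQH : Q.IsHermitian := (Matrix.conjTranspose_eq_transpose_of_trivial Q).trans hQ
  have hRH : R.IsHermitian := (Matrix.conjTranspose_eq_transpose_of_trivial R).trans hR
  have hPpsd : P.PosSemidef := by
    refine Matrix.PosSemidef.of_dotProduct_mulVec_nonneg hPH fun u => ?_
    have h0 := h.dotProduct_mulVec_nonneg (Sum.elim u 0)
    simpa [Matrix.fromBlocks_mulVec, sumElim_dotProduct_sumElim] using h0
  have hQpsd : Q.PosSemidef := by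
    refine Matrix.PosSemidef.of_dotProduct_mulVec_nonneg hQH fun u => ?_
    have h0 := h.dotProduct_mulVec_nonneg (Sum.elim 0 u)
    simpa [Matrix.fromBlocks_mulVec, sumElim_dotProduct_sumElim] using h0
  have hKpsd : (P + R + (R + Q)).PosSemidef := by
    refine Matrix.PosSemidef.of_dotProduct_mulVec_nonneg ((hPH.add hRH).add (hRH.add hQH)) fun u => ?_
    have h0 := h.dotProduct_mulVec_nonneg (Sum.elim u u)
    simp only [star_trivial, Matrix.fromBlocks_mulVec, sumElim_dotProduct_sumElim,
      Sum.elim_comp_inl, Sum.elim_comp_inr, Matrix.add_mulVec, dotProduct_add] at h0 ⊢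
    linarith
  have hΦP := hΦ P hPpsd
  have hΦQ := hΦ Q hQpsd
  have hΦK := hΦ _ hKpsd
  have hΦRH : (Φ R).IsHermitian := by
    have hΦRexpr : Φ R = (1/2 : ℝ) • (Φ (P + R + (R + Q)) - Φ P - Φ Q) := by
      simp only [map_add]
      module
    rw [hΦRexpr]
    show ((1/2 : ℝ) • (Φ (P + R + (R + Q)) - Φ P - Φ Q))ᴴ = _
    rw [Matrix.conjTranspose_smul, ((hΦK.1.sub hΦP.1).sub hΦQ.1).eq, star_trivial]
  refine Matrix.PosSemidef.of_dotProduct_mulVec_nonneg ?_ ?_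
  · rw [Matrix.isHermitian_fromBlocks_iff]
    exact ⟨hΦP.1, hΦRH.eq, hΦRH.eq, hΦQ.1⟩
  · intro z
    rw [star_trivial]
    set x := z ∘ Sum.inl with hx
    set y := z ∘ Sum.inr with hy
    have hz : z = Sum.elim x y := (Sum.elim_comp_inl_inr z).symm
    rw [hz, Matrix.fromBlocks_mulVec, sumElim_dotProduct_sumElim]
    simp only [Sum.elim_comp_inl, Sum.elim_comp_inr, dotProduct_add]
    set c0 := x ⬝ᵥ (Φ 1 *ᵥ x) + y ⬝ᵥ (Φ 1 *ᵥ y) with hc0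
    have hc0nn : 0 ≤ c0 := by
      have h1 := (hΦ 1 Matrix.PosSemidef.one).dotProduct_mulVec_nonneg x
      have h2 := (hΦ 1 Matrix.PosSemidef.one).dotProduct_mulVec_nonneg y
      rw [star_trivial] at h1 h2
      exact add_nonneg h1 h2
    have key : ∀ ε : ℝ, 0 < ε →
        0 ≤ x ⬝ᵥ (Φ P *ᵥ x) + x ⬝ᵥ (Φ R *ᵥ y) + (y ⬝ᵥ (Φ R *ᵥ x) + y ⬝ᵥ (Φ Q *ᵥ y))
          + ε * c0 := by
      intro ε hε
      have hεpd : (Matrix.diagonal (fun _ : Fin d => ε)).PosDef :=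
        Matrix.posDef_diagonal_iff.mpr fun _ => hε
      have hPε : (P + Matrix.diagonal (fun _ : Fin d => ε)).PosDef :=
        Matrix.PosDef.posSemidef_add hPpsd hεpd
      have hblock : (Matrix.fromBlocks (P + Matrix.diagonal (fun _ : Fin d => ε)) R R
          (Q + Matrix.diagonal (fun _ : Fin d => ε))).PosSemidef := by
        have hd : (Matrix.fromBlocks (Matrix.diagonal (fun _ : Fin d => ε)) 0 0
            (Matrix.diagonal (fun _ : Fin d => ε))).PosSemidef := by
          rw [Matrix.fromBlocks_diagonal]
          exact Matrix.posSemidef_diagonal_iff.mpr (fun i => by cases i <;> exact hε.le)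
        have := h.add hd
        rw [Matrix.fromBlocks_add] at this
        simpa only [add_zero] using this
      obtain ⟨V, Dv, hPe, hRe, hΔ⟩ := stmt4_decomp hPε hRH hblock
      have hq := stmt4_quad_nonneg Φ hΦ V Dv x y
      have hΔq := (hΦ _ hΔ).dotProduct_mulVec_nonneg y
      rw [star_trivial] at hΔq
      have hdiagsmul : Matrix.diagonal (fun _ : Fin d => ε) = ε • (1 : Matrix (Fin d) (Fin d) ℝ) :=
        (Matrix.smul_one_eq_diagonal ε).symm
      have e1 : Φ (V * Vᴴ) = Φ P + ε • Φ 1 := by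
        rw [← hPe, hdiagsmul, map_add, LinearMap.map_smul]
      have e3 : Φ (Q + Matrix.diagonal (fun _ : Fin d => ε)
            - V * Matrix.diagonal (fun i => Dv i ^ 2) * Vᴴ)
          = Φ Q + ε • Φ 1 - Φ (V * Matrix.diagonal (fun i => Dv i ^ 2) * Vᴴ) := by
        rw [map_sub, hdiagsmul, map_add, LinearMap.map_smul]
      rw [e1, ← hRe] at hq
      rw [e3] at hΔq
      simp only [Matrix.add_mulVec, Matrix.sub_mulVec, dotProduct_add, dotProduct_sub,
        Matrix.smul_mulVec, dotProduct_smul, smul_eq_mul] at hq hΔq ⊢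
      have hcc : ε * c0 = ε * (x ⬝ᵥ (Φ 1 *ᵥ x)) + ε * (y ⬝ᵥ (Φ 1 *ᵥ y)) := by
        rw [hc0]; ring
      linarith
    refine le_of_forall_pos_le_add fun δ hδ => ?_
    have hk := key (δ / (c0 + 1)) (by positivity)
    have hle : δ / (c0 + 1) * c0 ≤ δ := by
      rw [div_mul_eq_mul_div, div_le_iff₀ (by linarith)]
      nlinarith
    linarith
end
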